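/- In a star graph with center c and ℓ leaves (diameter 2), in any good system of categories the center c is contained in at least log₂ ℓ categories. -/

import Mathlib

open Finset SimpleGraph

variable {V : Type*}

def catDist [DecidableEq V] (S : Finset (Finset V)) (s t : V) : ℕ :=
  (S.filter fun C => t ∈ C ∧ s ∉ C).card

def IsGoodSystem [DecidableEq V] (G : SimpleGraph V) (S : Finset (Finset V)) : Prop :=
  (∀ C ∈ S, (G.induce (C : Set V)).Connected) ∧
    ∀ s t : V, s ≠ t → ∃ u, G.Adj s u ∧ catDist S u t < catDist S s t

def memdim [DecidableEq V] [Fintype V] (S : Finset (Finset V)) : ℕ :=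
  univ.sup fun v : V => (S.filter fun C => v ∈ C).card

noncomputable def graphDiam [Fintype V] (G : SimpleGraph V) : ℕ :=
  univ.sup fun p : V × V => G.dist p.1 p.2

noncomputable def minMemdim (V : Type*) [DecidableEq V] [Fintype V] (G : SimpleGraph V) : ℕ :=
  sInf {m | ∃ S : Finset (Finset V), IsGoodSystem G S ∧ memdim S = m}

def starGraph' (ℓ : ℕ) : SimpleGraph (Option (Fin ℓ)) where
  Adj a b := (a = none) ≠ (b = none)
  symm := ⟨fun _ _ h => h.symm⟩
  loopless := ⟨fun _ h => h rfl⟩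

theorem stmt7 (ℓ : ℕ) (S : Finset (Finset (Option (Fin ℓ))))
    (hS : IsGoodSystem (starGraph' ℓ) S) :
    Real.logb 2 ℓ ≤ (S.filter fun C => (none : Option (Fin ℓ)) ∈ C).card := by
  classical
  set Sc := S.filter fun C => (none : Option (Fin ℓ)) ∈ C with hSc
  -- connectivity: a category without the center contains at most one leaf
  have hconn : ∀ C ∈ S, (none : Option (Fin ℓ)) ∉ C →
      ∀ u v : Fin ℓ, some u ∈ C → some v ∈ C → u = v := by
    intro C hC hnone u v hu hv
    have hc := (hS.1 C hC).preconnected ⟨some u, hu⟩ ⟨some v, hv⟩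
    obtain ⟨w⟩ := hc
    cases w with
    | nil => simp_all
    | cons h _ =>
        exfalso
        rename_i b _
        have hadj : (starGraph' ℓ).Adj (some u) b.val := h
        have hb : b.val ≠ none := by
          intro hb
          exact hnone (hb ▸ b.property)
        simp [starGraph', hb] at hadj
  -- injective map from leaves into powerset of Sc
  set f : Fin ℓ → Finset (Finset (Option (Fin ℓ))) :=
    fun v => Sc.filter fun C => some v ∈ C with hf
  have hinj : Function.Injective f := by
    intro u v huv
    by_contra hne
    obtain ⟨w, hadj, hlt⟩ := hS.2 (some u) (some v) (by simpa using hne)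
    have hw : w = none := by
      by_contra hw
      simp [starGraph', hw] at hadj
    subst hw
    -- the filter for (none, some v) is a subset of the one for (some u, some v)
    have hsub : (S.filter fun C => some v ∈ C ∧ none ∉ C) ⊆
        S.filter fun C => some v ∈ C ∧ some u ∉ C := by
      intro C hC
      simp only [mem_filter] at hC ⊢
      refine ⟨hC.1, hC.2.1, fun hu => hne ?_⟩
      exact hconn C hC.1 hC.2.2 u v hu hC.2.1
    have hlt' : (S.filter fun C => some v ∈ C ∧ none ∉ C).card <
        (S.filter fun C => some v ∈ C ∧ some u ∉ C).card := hlt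
    have hss : (S.filter fun C => some v ∈ C ∧ none ∉ C) ⊂
        S.filter fun C => some v ∈ C ∧ some u ∉ C :=
      hsub.ssubset_of_ne (fun h => by rw [h] at hlt'; exact lt_irrefl _ hlt')
    obtain ⟨C, hC1, hC2⟩ := Finset.exists_of_ssubset hss
    simp only [mem_filter] at hC1 hC2
    push_neg at hC2
    have hCnone : (none : Option (Fin ℓ)) ∈ C := hC2 hC1.1 hC1.2.1
    have hCfv : C ∈ f v := by
      simp only [hf, hSc, mem_filter]
      exact ⟨⟨hC1.1, hCnone⟩, hC1.2.1⟩
    have hCfu : C ∉ f u := by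
      simp only [hf, mem_filter]
      exact fun h => hC1.2.2 h.2
    rw [huv] at hCfu
    exact hCfu hCfv
  -- counting
  have hcard : ℓ ≤ 2 ^ Sc.card := by
    have h1 : (univ : Finset (Fin ℓ)).card ≤ Sc.powerset.card :=
      Finset.card_le_card_of_injOn f
        (fun v _ => Finset.mem_powerset.2 (Finset.filter_subset _ _))
        (Set.injOn_of_injective hinj)
    simpa [Finset.card_powerset] using h1
  rcases Nat.eq_zero_or_pos ℓ with h0 | hpos
  · simp [h0, Real.logb]
  · rw [Real.logb_le_iff_le_rpow (by norm_num) (by positivity)]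
    rw [Real.rpow_natCast]
    exact_mod_cast hcard
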